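/- Let δ ∈ (0, 1/2] and let B be a symmetric real d×d matrix. Then B : (I − g_δ′(B)) ≥ (1/2)|B| − d, where the colon denotes the Frobenius inner product and |B| the Frobenius norm. -/

import Mathlib

open Matrix

/-- The Frobenius inner product of two real matrices. -/
noncomputable def frobInner {d : ℕ} (A C : Matrix (Fin d) (Fin d) ℝ) : ℝ :=
  ∑ i, ∑ j, A i j * C i j

/-- The Frobenius norm of a real matrix. -/
noncomputable def frobNorm {d : ℕ} (A : Matrix (Fin d) (Fin d) ℝ) : ℝ :=
  Real.sqrt (∑ i, ∑ j, (A i j) ^ 2)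

/-- The matrix obtained by applying a scalar function `F : ℝ → ℝ` to the spectrum of a
symmetric (Hermitian) real matrix `B`. -/
noncomputable def specApply {d : ℕ} (F : ℝ → ℝ) {B : Matrix (Fin d) (Fin d) ℝ}
    (hB : B.IsHermitian) : Matrix (Fin d) (Fin d) ℝ :=
  (hB.eigenvectorUnitary : Matrix (Fin d) (Fin d) ℝ) *
    Matrix.diagonal (fun i => F (hB.eigenvalues i)) *
    star (hB.eigenvectorUnitary : Matrix (Fin d) (Fin d) ℝ)

lemma specApply_trace {d : ℕ} (F : ℝ → ℝ) {B : Matrix (Fin d) (Fin d) ℝ}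
    (hB : B.IsHermitian) :
    (specApply F hB).trace = ∑ i, F (hB.eigenvalues i) := by
  unfold specApply
  rw [Matrix.trace_mul_cycle,
    (Matrix.mem_unitaryGroup_iff').mp (hB.eigenvectorUnitary).2, one_mul,
    Matrix.trace_diagonal]

lemma eq_specApply_id {d : ℕ} {B : Matrix (Fin d) (Fin d) ℝ}
    (hB : B.IsHermitian) : B = specApply id hB := by
  conv_lhs => rw [hB.spectral_theorem]
  rfl

lemma mul_specApply {d : ℕ} (F : ℝ → ℝ) {B : Matrix (Fin d) (Fin d) ℝ}
    (hB : B.IsHermitian) :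
    B * specApply F hB = specApply (fun s => s * F s) hB := by
  rw [show B * specApply F hB = specApply id hB * specApply F hB from
    congrArg (fun M => M * specApply F hB) (eq_specApply_id hB)]
  unfold specApply
  have h1 : star (hB.eigenvectorUnitary : Matrix (Fin d) (Fin d) ℝ) *
      (hB.eigenvectorUnitary : Matrix (Fin d) (Fin d) ℝ) = 1 :=
    (Matrix.mem_unitaryGroup_iff').mp (hB.eigenvectorUnitary).2
  rw [show ∀ (U D E V : Matrix (Fin d) (Fin d) ℝ),
      (U * D * V) * (U * E * V) = U * D * (V * U) * E * V by
    intros; noncomm_ring]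
  rw [h1, Matrix.mul_one, Matrix.mul_assoc _ _ (Matrix.diagonal _),
    Matrix.diagonal_mul_diagonal]
  rfl

lemma frobInner_eq_trace {d : ℕ} {B : Matrix (Fin d) (Fin d) ℝ}
    (hB : B.IsHermitian) (M : Matrix (Fin d) (Fin d) ℝ) :
    frobInner B M = (B * M).trace := by
  have hBt : B.transpose = B := hB
  have hsym : ∀ i j, B i j = B j i := fun i j =>
    (Matrix.transpose_apply B j i).symm.trans (congrFun (congrFun hBt j) i)
  simp only [frobInner, Matrix.trace, Matrix.diag, Matrix.mul_apply]
  rw [Finset.sum_comm]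
  exact Finset.sum_congr rfl fun j _ => Finset.sum_congr rfl fun i _ => by
    rw [hsym i j]

lemma pointwise_bound {δ : ℝ} (h0 : 0 < δ) (h2 : δ ≤ 1/2) (x : ℝ) :
    |x| / 2 - 1 ≤ x * (1 - 1 / max x δ) := by
  rcases le_or_gt δ x with h | h
  · rw [max_eq_left h]
    have hx : 0 < x := lt_of_lt_of_le h0 h
    rw [abs_of_pos hx]
    have : x * (1 - 1/x) = x - 1 := by field_simp
    rw [this]
    nlinarith
  · rw [max_eq_right h.le]
    rcases le_or_gt x 0 with hx | hx
    · rw [abs_of_nonpos hx]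
      have h1 : 1 / δ ≥ 2 := by
        rw [ge_iff_le, le_div_iff₀ h0]; linarith
      nlinarith [mul_nonneg (neg_nonneg.mpr hx) (sub_nonneg.mpr (by linarith : (1:ℝ) ≤ 1/δ))]
    · rw [abs_of_pos hx]
      have hxδ : x / δ < 1 := (div_lt_one h0).mpr h
      have : x * (1 - 1/δ) = x - x/δ := by field_simp
      rw [this]
      nlinarith

/-- For `δ ∈ (0, 1/2]` and a symmetric real `d × d` matrix `B`,
`B : (I - g_δ'(B)) ≥ (1/2) |B| - d`, where `g_δ'(s) = 1 / max s δ`, `:` is the Frobenius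
inner product and `|B|` the Frobenius norm. -/
theorem frobInner_ge_half_frobNorm_sub_dim {d : ℕ} (hd : 0 < d) (δ : ℝ)
    (hδ : δ ∈ Set.Ioc (0:ℝ) (1/2)) (B : Matrix (Fin d) (Fin d) ℝ) (hB : B.IsHermitian) :
    (1 / 2) * frobNorm B - (d : ℝ) ≤
      frobInner B ((1 : Matrix (Fin d) (Fin d) ℝ) - specApply (fun s => 1 / max s δ) hB) := by
  obtain ⟨h0, h2⟩ := hδ
  set lam := hB.eigenvalues with hlam
  have hone : (1 : Matrix (Fin d) (Fin d) ℝ) = specApply (fun _ => 1) hB := by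
    unfold specApply
    rw [Matrix.diagonal_one, Matrix.mul_one,
      (Matrix.mem_unitaryGroup_iff).mp (hB.eigenvectorUnitary).2]
  have hsub : (1 : Matrix (Fin d) (Fin d) ℝ) - specApply (fun s => 1 / max s δ) hB
      = specApply (fun s => 1 - 1 / max s δ) hB := by
    rw [hone]
    unfold specApply
    rw [← Matrix.sub_mul, ← Matrix.mul_sub, Matrix.diagonal_sub]
  have hrhs : frobInner B ((1 : Matrix (Fin d) (Fin d) ℝ)
        - specApply (fun s => 1 / max s δ) hB)
      = ∑ i, lam i * (1 - 1 / max (lam i) δ) := by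
    rw [hsub, frobInner_eq_trace hB, mul_specApply, specApply_trace]
  rw [hrhs]
  have hBt : B.transpose = B := hB
  have hsym : ∀ i j, B i j = B j i := fun i j =>
    (Matrix.transpose_apply B j i).symm.trans (congrFun (congrFun hBt j) i)
  have hsq : ∑ i, ∑ j, (B i j) ^ 2 = ∑ i, (lam i)^2 := by
    have hBB : (B * B).trace = ∑ i, lam i * lam i := by
      conv_lhs => rw [show B * B = B * specApply id hB by rw [← eq_specApply_id hB]]
      rw [mul_specApply, specApply_trace]
      simp [hlam]
    have ht : (B * B).trace = ∑ i, ∑ j, (B i j)^2 := by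
      simp only [Matrix.trace, Matrix.diag, Matrix.mul_apply]
      rw [Finset.sum_comm]
      exact Finset.sum_congr rfl fun j _ => Finset.sum_congr rfl fun i _ => by
        rw [sq, hsym i j]
    rw [← ht, hBB]
    exact Finset.sum_congr rfl fun i _ => (sq (lam i)).symm
  have hnorm : frobNorm B ≤ ∑ i, |lam i| := by
    unfold frobNorm
    rw [hsq]
    have key : ∑ i, (lam i)^2 ≤ (∑ i, |lam i|)^2 := by
      rw [sq, Finset.sum_mul_sum]
      apply Finset.sum_le_sum
      intro i _
      calc (lam i)^2 = |lam i| * |lam i| := by rw [← sq_abs, sq]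
        _ ≤ ∑ j, |lam i| * |lam j| :=
            Finset.single_le_sum (f := fun j => |lam i| * |lam j|)
              (fun j _ => mul_nonneg (abs_nonneg _) (abs_nonneg _)) (Finset.mem_univ i)
    calc Real.sqrt (∑ i, (lam i)^2) ≤ Real.sqrt ((∑ i, |lam i|)^2) :=
          Real.sqrt_le_sqrt key
      _ = ∑ i, |lam i| := Real.sqrt_sq (Finset.sum_nonneg fun i _ => abs_nonneg _)
  calc (1/2) * frobNorm B - (d:ℝ) ≤ (1/2) * ∑ i, |lam i| - (d:ℝ) := by nlinarith
    _ = ∑ i, (|lam i| / 2 - 1) := by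
        rw [Finset.sum_sub_distrib, Finset.mul_sum]
        simp [Finset.card_fin, div_eq_mul_inv, mul_comm]
    _ ≤ ∑ i, lam i * (1 - 1 / max (lam i) δ) :=
        Finset.sum_le_sum fun i _ => pointwise_bound h0 h2 (lam i)
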